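/- Chi-squared lower tail bound (Lemma A4(a), lower part): Let n and d be positive integers with d < n, let Z be a random variable distributed as chi-squared with n − d degrees of freedom, and let ε > 0 satisfy nε > d. Then P(Z/n ≤ 1 − ε) ≤ exp(−min{(nε − d)²/(8(n − d)), (nε − d)/8}). -/

import Mathlib

open MeasureTheory Matrix

/-- Frobenius norm of a real matrix. -/
noncomputable def frobNorm {m n : Type*} [Fintype m] [Fintype n] (A : Matrix m n ℝ) : ℝ :=
  Real.sqrt (∑ i, ∑ j, (A i j) ^ 2)

/-- ℓ2 operator norm (largest singular value) of a real matrix. -/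
noncomputable def opNorm {m n : Type*} [Fintype m] [Fintype n] [DecidableEq n]
    (A : Matrix m n ℝ) : ℝ :=
  ‖LinearMap.toContinuousLinearMap (Matrix.toEuclideanLin A)‖

/-- Entrywise maximum absolute value of a real matrix. -/
noncomputable def maxNorm {m n : Type*} [Fintype m] [Fintype n] (A : Matrix m n ℝ) : ℝ :=
  ⨆ i, ⨆ j, |A i j|

/-- Smallest eigenvalue of a real symmetric matrix, via the Rayleigh quotient
(infimum of the quadratic form over the unit sphere). -/
noncomputable def lambdaMin {n : Type*} [Fintype n] (A : Matrix n n ℝ) : ℝ :=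
  ⨅ x : {x : n → ℝ // ∑ i, x i ^ 2 = 1}, ∑ i, ∑ j, x.1 i * A i j * x.1 j

/-- Largest eigenvalue of a real symmetric matrix, via the Rayleigh quotient
(supremum of the quadratic form over the unit sphere). -/
noncomputable def lambdaMax {n : Type*} [Fintype n] (A : Matrix n n ℝ) : ℝ :=
  ⨆ x : {x : n → ℝ // ∑ i, x i ^ 2 = 1}, ∑ i, ∑ j, x.1 i * A i j * x.1 j

/-- Submatrix of `U` assembling the columns indexed by the finite set `ξ`. -/
def colSub {n p : ℕ} (U : Matrix (Fin n) (Fin p) ℝ) (ξ : Finset (Fin p)) :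
    Matrix (Fin n) {j : Fin p // j ∈ ξ} ℝ :=
  Matrix.of fun i j => U i j.1


open Real Set ProbabilityTheory

lemma gamma_laplace {a r t : ℝ} (ha : 0 < a) (hr : 0 < r) (ht : 0 < t) :
    ∫⁻ x, ENNReal.ofReal (Real.exp (-(t*x))) * gammaPDF a r x
      = ENNReal.ofReal ((r/(r+t)) ^ a) := by
  have hrt : 0 < r + t := by linarith
  have key : ∀ x, ENNReal.ofReal (Real.exp (-(t*x))) * gammaPDF a r x
      = ENNReal.ofReal ((r/(r+t)) ^ a) * gammaPDF a (r+t) x := by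
    intro x
    rw [gammaPDF, gammaPDF,
      ← ENNReal.ofReal_mul (Real.exp_nonneg _),
      ← ENNReal.ofReal_mul (Real.rpow_nonneg (by positivity) _)]
    congr 1
    unfold gammaPDFReal
    split_ifs with hx
    · have h1 : (r/(r+t)) ^ a = r ^ a / (r+t) ^ a := Real.div_rpow hr.le hrt.le a
      have h2 : Real.exp (-(t*x)) * Real.exp (-(r*x)) = Real.exp (-((r+t)*x)) := by
        rw [← Real.exp_add]; ring_nf
      have h3 : ((r+t):ℝ) ^ a ≠ 0 := (Real.rpow_pos_of_pos hrt a).ne'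
      rw [h1, ← h2]
      field_simp
    · simp
  have hmeas : Measurable (gammaPDF a (r+t)) := (measurable_gammaPDFReal a (r+t)).ennreal_ofReal
  simp_rw [key]
  rw [lintegral_const_mul _ hmeas, lintegral_gammaPDF_eq_one ha hrt, mul_one]

lemma gamma_tail {a r t c : ℝ} (ha : 0 < a) (hr : 0 < r) (ht : 0 < t) :
    ∫⁻ x in Set.Iic c, gammaPDF a r x
      ≤ ENNReal.ofReal (Real.exp (t*c) * (r/(r+t)) ^ a) := by
  have hmeas : Measurable fun x : ℝ => ENNReal.ofReal (Real.exp (t*(c-x))) * gammaPDF a r x := by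
    apply Measurable.fun_mul
    · fun_prop
    · exact (measurable_gammaPDFReal a r).ennreal_ofReal
  calc ∫⁻ x in Set.Iic c, gammaPDF a r x
      ≤ ∫⁻ x in Set.Iic c, ENNReal.ofReal (Real.exp (t*(c-x))) * gammaPDF a r x := by
        apply setLIntegral_mono hmeas
        intro x hx
        nth_rewrite 1 [← one_mul (gammaPDF a r x)]
        apply mul_le_mul_left
        exact ENNReal.one_le_ofReal.mpr (Real.one_le_exp (by nlinarith [mem_Iic.mp hx]))
    _ ≤ ∫⁻ x, ENNReal.ofReal (Real.exp (t*(c-x))) * gammaPDF a r x :=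
        setLIntegral_le_lintegral _ _
    _ = ENNReal.ofReal (Real.exp (t*c)) * ∫⁻ x, ENNReal.ofReal (Real.exp (-(t*x))) * gammaPDF a r x := by
        simp_rw [show ∀ x:ℝ, t*(c-x) = t*c + -(t*x) from fun x => by ring, Real.exp_add,
          ENNReal.ofReal_mul (Real.exp_nonneg _), mul_assoc]
        have hg : Measurable fun x : ℝ => ENNReal.ofReal (Real.exp (-(t*x))) * gammaPDF a r x :=
          Measurable.mul (by fun_prop) ((measurable_gammaPDFReal a r).ennreal_ofReal)
        rw [lintegral_const_mul _ hg]
    _ = ENNReal.ofReal (Real.exp (t*c) * (r/(r+t)) ^ a) := by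
        rw [gamma_laplace ha hr ht, ← ENNReal.ofReal_mul (Real.exp_nonneg _)]


lemma chisq_real_ineq (m A c : ℝ) (hm0 : 0 < m) (hA0 : 0 < A) (hc : 0 < c)
    (hcA : c = m - A) :
    Real.exp ((A/(4*c))*c) * ((1/2)/((1/2) + A/(4*c)))^(m/2)
      ≤ Real.exp (-(min (A^2/(8*m)) (A/8))) := by
  subst hcA
  have h2mA : 0 < 2*m - A := by nlinarith
  set c : ℝ := m - A with hcA
  have ht : 0 < A / (4*c) := div_pos hA0 (by linarith)
  have hq : (0:ℝ) < 2*c/(2*m - A) := by positivity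
  have hqeq : (1/2)/((1/2)+A/(4*c)) = 2*c/(2*m-A) := by
    rw [div_eq_div_iff (by positivity) (by linarith)]
    rw [hcA]
    have hc' : m - A ≠ 0 := (by linarith : (0:ℝ) < m - A).ne'
    field_simp
    ring
  have htc : A/(4*c)*c = A/4 := by field_simp
  rw [hqeq, htc, ← Real.exp_log (Real.rpow_pos_of_pos hq (m/2)), ← Real.exp_add,
    Real.log_rpow hq]
  apply Real.exp_le_exp.mpr
  have hlog : Real.log (2*c/(2*m-A)) ≤ -A/(2*m-A) := by
    have h5 := Real.log_le_sub_one_of_pos hq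
    have heq : 2*c/(2*m-A) - 1 = -A/(2*m-A) := by
      rw [hcA, div_sub_one h2mA.ne']
      ring_nf
    linarith [heq ▸ h5]
  have h1 : m/2 * Real.log (2*c/(2*m-A)) ≤ m/2 * (-A/(2*m-A)) :=
    mul_le_mul_of_nonneg_left hlog (by linarith)
  have h2 : A/4 + m/2 * (-A/(2*m-A)) = -(A^2/(4*(2*m-A))) := by
    rw [hcA] at hc
    have h2mA' := h2mA.ne'
    have hinv : (2*m-A) * (2*m-A)⁻¹ = 1 := mul_inv_cancel₀ h2mA'
    simp only [div_eq_mul_inv, mul_inv]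
    linear_combination (-(A/4)) * hinv
  have h3 : A^2/(8*m) ≤ A^2/(4*(2*m-A)) := by
    apply div_le_div_of_nonneg_left (by positivity) (by linarith) (by linarith)
  have h4 : min (A^2/(8*m)) (A/8) ≤ A^2/(8*m) := min_le_left _ _
  linarith


/-- chi-squared lower tail bound, Lemma A4(a), lower part.
Here the chi-squared distribution with `n - d` degrees of freedom is the Gamma
distribution with shape `(n-d)/2` and rate `1/2`.  If `nε > d` then
`P(Z/n ≤ 1 - ε) ≤ exp(-min{(nε - d)²/(8(n-d)), (nε - d)/8})`. -/
theorem chi_squared_lower_tail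
    {Ω : Type*} [MeasureSpace Ω] [IsProbabilityMeasure (volume : Measure Ω)]
    (n d : ℕ) (hd : 0 < d) (hdn : d < n)
    (Z : Ω → ℝ)
    (hZ : Measure.map Z volume = ProbabilityTheory.gammaMeasure (((n : ℝ) - d) / 2) (1 / 2))
    (ε : ℝ) (hε : 0 < ε) (h : (d : ℝ) < n * ε) :
    volume {ω | Z ω / n ≤ 1 - ε} ≤
      ENNReal.ofReal (Real.exp (-(min (((n : ℝ) * ε - d) ^ 2 / (8 * ((n : ℝ) - d)))
        (((n : ℝ) * ε - d) / 8)))) := by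
  have hmd : (d:ℝ) < n := by exact_mod_cast hdn
  set m : ℝ := (n:ℝ) - d with hm
  set A : ℝ := (n:ℝ)*ε - d with hA
  have hm0 : 0 < m := by simp only [hm]; linarith
  have hA0 : 0 < A := by simp only [hA]; linarith
  have ha : 0 < m/2 := by linarith
  have hprob : IsProbabilityMeasure (ProbabilityTheory.gammaMeasure (m/2) (1/2)) :=
    ProbabilityTheory.isProbabilityMeasure_gammaMeasure ha one_half_pos
  have hZm : AEMeasurable Z volume := by
    by_contra hc
    rw [Measure.map_of_not_aemeasurable hc] at hZ
    have h1 := hprob.measure_univ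
    rw [← hZ] at h1
    simp at h1
  have hn0 : (0:ℝ) < n := by linarith [Nat.cast_nonneg (α := ℝ) d]
  have hset : {ω | Z ω / n ≤ 1 - ε} = Z ⁻¹' (Set.Iic ((n:ℝ)*(1-ε))) := by
    ext ω
    simp only [Set.mem_setOf_eq, Set.mem_preimage, Set.mem_Iic, div_le_iff₀ hn0, mul_comm]
  rw [hset, ← Measure.map_apply_of_aemeasurable hZm measurableSet_Iic, hZ,
    ProbabilityTheory.gammaMeasure, withDensity_apply _ measurableSet_Iic]
  by_cases hc : 0 < (n:ℝ)*(1-ε)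
  · have hcA : (n:ℝ)*(1-ε) = m - A := by simp only [hm, hA]; ring
    have ht : 0 < A / (4*((n:ℝ)*(1-ε))) := div_pos hA0 (by linarith)
    refine le_trans (gamma_tail ha one_half_pos ht) ?_
    exact ENNReal.ofReal_le_ofReal
      (chisq_real_ineq m A ((n:ℝ)*(1-ε)) hm0 hA0 hc hcA)
  · push_neg at hc
    have hzero : ∫⁻ x in Set.Iic ((n:ℝ)*(1-ε)),
        ProbabilityTheory.gammaPDF (m/2) (1/2) x = 0 := by
      rw [← setLIntegral_congr Iio_ae_eq_Iic]
      exact ProbabilityTheory.lintegral_gammaPDF_of_nonpos hc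
    rw [hzero]
    exact zero_le
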